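/- arXiv:1709.08075 — 3 statements merged into one kernel-verified Lean document; each statement's English description precedes it below -/
import Mathlib

section
/- Let F : ℝ → ℝ ∪ {+∞} be proper, convex and lower semicontinuous, with convex conjugate F*. Then for every x > 0 and y ∈ ℝ, x·F(y/x) = sup { a·x + b·y : (a,b) ∈ ℝ², a + F*(b) ≤ 0 } (as an equality in ℝ ∪ {+∞}). -/
open Set Filter Topology


/-- The convex conjugate of `F : ℝ → ℝ ∪ {+∞}`:
`F*(b) = sup_y (y·b - F y)`, with values in the extended reals. -/
noncomputable def erealConjugate (F : ℝ → EReal) (b : ℝ) : EReal :=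
  ⨆ y : ℝ, ((y * b : ℝ) : EReal) - F y


lemma ereal_le_of_forall_real_lt {a b : EReal}
    (h : ∀ r : ℝ, (r : EReal) < a → (r : EReal) ≤ b) : a ≤ b := by
  by_contra hab
  push_neg at hab
  obtain ⟨r, hr1, hr2⟩ := EReal.exists_between_coe_real hab
  exact absurd (h r hr2) (not_le.mpr hr1)

section Sep
variable (F : ℝ → EReal)

def epi : Set (ℝ × ℝ) := {p | F p.1 ≤ (p.2 : EReal)}

lemma mem_epi_finite {p : ℝ × ℝ} (hb : F p.1 ≠ ⊥) (hp : p ∈ epi F) :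
    F p.1 = ((F p.1).toReal : EReal) ∧ (F p.1).toReal ≤ p.2 := by
  have hp' : F p.1 ≤ (p.2 : EReal) := hp
  have ht : F p.1 ≠ ⊤ := fun h => by rw [h] at hp'; exact absurd hp' (by simp)
  have h1 : F p.1 = ((F p.1).toReal : EReal) := (EReal.coe_toReal ht hb).symm
  refine ⟨h1, ?_⟩
  rw [h1] at hp'
  exact_mod_cast hp'

lemma epi_convex
    (hconv : ∀ y z : ℝ, ∀ s t : ℝ, 0 ≤ s → 0 ≤ t → s + t = 1 →
      F (s * y + t * z) ≤ (s : EReal) * F y + (t : EReal) * F z)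
    (hne_bot : ∀ y, F y ≠ ⊥) : Convex ℝ (epi F) := by
  intro p hp q hq a b ha hb hab
  obtain ⟨hpe, hpu⟩ := mem_epi_finite F (hne_bot p.1) hp
  obtain ⟨hqe, hqu⟩ := mem_epi_finite F (hne_bot q.1) hq
  set u := (F p.1).toReal
  set v := (F q.1).toReal
  have key : F (a * p.1 + b * q.1) ≤ ((a * p.2 + b * q.2 : ℝ) : EReal) := by
    calc F (a * p.1 + b * q.1) ≤ (a : EReal) * F p.1 + (b : EReal) * F q.1 :=
          hconv _ _ a b ha hb hab
      _ = ((a * u + b * v : ℝ) : EReal) := by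
          rw [hpe, hqe, ← EReal.coe_mul, ← EReal.coe_mul, ← EReal.coe_add]
      _ ≤ ((a * p.2 + b * q.2 : ℝ) : EReal) := by
          apply EReal.coe_le_coe_iff.mpr
          have := mul_le_mul_of_nonneg_left hpu ha
          have := mul_le_mul_of_nonneg_left hqu hb
          linarith
  show F (a • p + b • q).1 ≤ (((a • p + b • q).2 : ℝ) : EReal)
  simpa [Prod.smul_def, smul_eq_mul] using key

lemma epi_closed (hlsc : LowerSemicontinuous F) : IsClosed (epi F) := by
  rw [← isOpen_compl_iff, isOpen_iff_mem_nhds]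
  intro p hp
  simp only [mem_compl_iff, epi, mem_setOf_eq, not_le] at hp
  obtain ⟨q, hq1, hq2⟩ := EReal.exists_between_coe_real hp
  have h1 : ∀ᶠ s in 𝓝 p.1, (q : EReal) < F s := hlsc p.1 _ hq2
  have h2 : ∀ᶠ u : ℝ in 𝓝 p.2, u < q := by
    have : p.2 < q := by exact_mod_cast hq1
    exact eventually_lt_nhds this
  have h3 := h1.prod_nhds h2
  rw [← @Prod.mk.eta _ _ p]
  refine h3.mono fun z hz => ?_
  simp only [mem_compl_iff, epi, mem_setOf_eq, not_le]
  calc ((z.2 : ℝ) : EReal) < (q : EReal) := by exact_mod_cast hz.2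
    _ < F z.1 := hz.1
end Sep

section Sep2
variable (F : ℝ → EReal)

lemma epi_sep (hE : Convex ℝ (epi F)) (hEc : IsClosed (epi F)) {p : ℝ × ℝ}
    (hp : p ∉ epi F) :
    ∃ β γ c : ℝ, β * p.1 + γ * p.2 < c ∧ ∀ q ∈ epi F, c < β * q.1 + γ * q.2 := by
  obtain ⟨f, c, hfp, hfq⟩ := geometric_hahn_banach_point_closed hE hEc hp
  have hdec : ∀ z : ℝ × ℝ, f z = f (1, 0) * z.1 + f (0, 1) * z.2 := by
    intro z
    have hz : z = z.1 • ((1 : ℝ), (0 : ℝ)) + z.2 • ((0 : ℝ), (1 : ℝ)) := by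
      ext <;> simp
    rw [show f z = f (z.1 • ((1 : ℝ), (0 : ℝ)) + z.2 • ((0 : ℝ), (1 : ℝ))) from by rw [← hz]]
    rw [map_add, map_smul, map_smul, smul_eq_mul, smul_eq_mul]
    ring
  exact ⟨f (1, 0), f (0, 1), c, by rw [← hdec]; exact hfp,
    fun q hq => by rw [← hdec]; exact hfq q hq⟩

lemma epi_up {s u n : ℝ} (h : (s, u) ∈ epi F) (hn : 0 ≤ n) : (s, u + n) ∈ epi F := by
  have h' : F s ≤ (u : EReal) := h
  exact le_trans h' (by exact_mod_cast by linarith : (u : EReal) ≤ ((u + n : ℝ) : EReal))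

lemma gamma_nonneg {β γ c s0 u0 : ℝ} (h0 : (s0, u0) ∈ epi F)
    (hsep : ∀ q ∈ epi F, c < β * q.1 + γ * q.2) : 0 ≤ γ := by
  by_contra hγ
  push_neg at hγ
  set n := (c - β * s0 - γ * u0) / γ with hn
  have hn0 : 0 ≤ n := by
    have := hsep (s0, u0) h0
    simp only at this
    apply le_div_iff_of_neg hγ |>.mpr
    nlinarith
  have := hsep (s0, u0 + n) (epi_up F h0 hn0)
  simp only at this
  have hγn : γ * n = c - β * s0 - γ * u0 := by
    rw [hn, mul_div_assoc']
    exact mul_div_cancel_left₀ _ (ne_of_lt hγ)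
  nlinarith [this, hγn]

/-- existence of a global affine minorant -/
lemma exists_affine_minorant (hne_bot : ∀ y, F y ≠ ⊥) (hproper : ∃ y, F y ≠ ⊤)
    (hE : Convex ℝ (epi F)) (hEc : IsClosed (epi F)) :
    ∃ b c : ℝ, ∀ s : ℝ, ((b * s + c : ℝ) : EReal) ≤ F s := by
  obtain ⟨s0, hs0⟩ := hproper
  set u0 := (F s0).toReal with hu0
  have h0 : (s0, u0) ∈ epi F := by
    show F s0 ≤ ((u0 : ℝ) : EReal)
    rw [hu0, EReal.coe_toReal hs0 (hne_bot s0)]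
  have hpn : (s0, u0 - 1) ∉ epi F := by
    intro h
    have h' : F s0 ≤ ((u0 - 1 : ℝ) : EReal) := h
    rw [show F s0 = ((u0 : ℝ) : EReal) from (EReal.coe_toReal hs0 (hne_bot s0)).symm] at h'
    have : (u0 : ℝ) ≤ u0 - 1 := by exact_mod_cast h'
    linarith
  obtain ⟨β, γ, c, h1, h2⟩ := epi_sep F hE hEc hpn
  have hγ : 0 ≤ γ := gamma_nonneg F h0 h2
  have hγpos : 0 < γ := by
    rcases hγ.lt_or_eq with h | h
    · exact h
    · exfalso
      have := h2 (s0, u0) h0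
      simp only at this h1
      rw [← h] at this h1
      simp only [zero_mul] at this h1
      linarith
  -- minorant : s ↦ (-β/γ) s + c/γ
  refine ⟨-β / γ, c / γ, fun s => ?_⟩
  rcases eq_or_ne (F s) ⊤ with h | h
  · rw [h]; exact le_top
  · have hs : (s, (F s).toReal) ∈ epi F := by
      show F s ≤ (((F s).toReal : ℝ) : EReal)
      rw [EReal.coe_toReal h (hne_bot s)]
    have := h2 _ hs
    simp only at this
    rw [show F s = (((F s).toReal : ℝ) : EReal) from (EReal.coe_toReal h (hne_bot s)).symm]
    apply EReal.coe_le_coe_iff.mpr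
    rw [div_mul_eq_mul_div, ← add_div, div_le_iff₀ hγpos]
    nlinarith
end Sep2

lemma exists_minorant (F : ℝ → EReal) (hne_bot : ∀ y, F y ≠ ⊥) (hproper : ∃ y, F y ≠ ⊤)
    (hE : Convex ℝ (epi F)) (hEc : IsClosed (epi F)) (t r : ℝ) (hr : (r : EReal) < F t) :
    ∃ b c : ℝ, (∀ s : ℝ, ((b * s + c : ℝ) : EReal) ≤ F s) ∧ r < b * t + c := by
  obtain ⟨s0, hs0⟩ := hproper
  have h0 : (s0, (F s0).toReal) ∈ epi F := by
    show F s0 ≤ (((F s0).toReal : ℝ) : EReal)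
    rw [EReal.coe_toReal hs0 (hne_bot s0)]
  have hpt : (t, r) ∉ epi F := by
    intro h
    exact absurd (h : F t ≤ (r : EReal)) (not_le.mpr hr)
  obtain ⟨β, γ, c, h1, h2⟩ := epi_sep F hE hEc hpt
  simp only at h1
  have hγ : 0 ≤ γ := gamma_nonneg F h0 h2
  rcases hγ.lt_or_eq with hγpos | hγ0
  · -- minorant s ↦ (-β/γ) s + c/γ, value at t exceeds r
    refine ⟨-β / γ, c / γ, fun s => ?_, ?_⟩
    · rcases eq_or_ne (F s) ⊤ with h | h
      · rw [h]; exact le_top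
      · have hs : (s, (F s).toReal) ∈ epi F := by
          show F s ≤ (((F s).toReal : ℝ) : EReal)
          rw [EReal.coe_toReal h (hne_bot s)]
        have := h2 _ hs
        simp only at this
        rw [show F s = (((F s).toReal : ℝ) : EReal) from (EReal.coe_toReal h (hne_bot s)).symm]
        apply EReal.coe_le_coe_iff.mpr
        rw [div_mul_eq_mul_div, ← add_div, div_le_iff₀ hγpos]
        nlinarith
    · rw [div_mul_eq_mul_div, ← add_div, lt_div_iff₀ hγpos]
      nlinarith
  · -- γ = 0 : β s > c for s ∈ dom, β t < c ; tilt a global minorant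
    obtain ⟨b0, c0, hm⟩ := exists_affine_minorant F hne_bot ⟨s0, hs0⟩ hE hEc
    rw [← hγ0] at h1 h2
    simp only [zero_mul, add_zero] at h1
    set d := c - β * t with hd
    have hdpos : 0 < d := by rw [hd]; linarith
    set n := max 0 ((r - (b0 * t + c0)) / d + 1) with hn
    have hn0 : 0 ≤ n := le_max_left _ _
    have hnd : r - (b0 * t + c0) < n * d := by
      have h3 : (r - (b0 * t + c0)) / d + 1 ≤ n := le_max_right _ _
      have h4 : (r - (b0 * t + c0)) / d < n := by linarith
      calc r - (b0 * t + c0) = (r - (b0 * t + c0)) / d * d := by field_simp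
        _ < n * d := by exact mul_lt_mul_of_pos_right h4 hdpos
    refine ⟨b0 - n * β, c0 + n * c, fun s => ?_, by nlinarith⟩
    rcases eq_or_ne (F s) ⊤ with h | h
    · rw [h]; exact le_top
    · have hs : (s, (F s).toReal) ∈ epi F := by
        show F s ≤ (((F s).toReal : ℝ) : EReal)
        rw [EReal.coe_toReal h (hne_bot s)]
      have h5 := h2 _ hs
      simp only [zero_mul, add_zero] at h5
      refine le_trans ?_ (hm s)
      apply EReal.coe_le_coe_iff.mpr
      nlinarith

lemma conj_le (F : ℝ → EReal) (hne_bot : ∀ y, F y ≠ ⊥) (b c : ℝ)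
    (h : ∀ s : ℝ, ((b * s + c : ℝ) : EReal) ≤ F s) :
    erealConjugate F b ≤ ((-c : ℝ) : EReal) := by
  apply iSup_le
  intro s
  rcases eq_or_ne (F s) ⊤ with hs | hs
  · rw [hs, EReal.sub_top]; exact bot_le
  · rw [show F s = (((F s).toReal : ℝ) : EReal) from (EReal.coe_toReal hs (hne_bot s)).symm,
      ← EReal.coe_sub]
    apply EReal.coe_le_coe_iff.mpr
    have := h s
    rw [show F s = (((F s).toReal : ℝ) : EReal) from (EReal.coe_toReal hs (hne_bot s)).symm] at this
    have := EReal.coe_le_coe_iff.mp this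
    linarith

lemma real_le_conj (F : ℝ → EReal) {s0 : ℝ} (hs0 : F s0 ≠ ⊤) (hb0 : F s0 ≠ ⊥) (b : ℝ) :
    ((s0 * b - (F s0).toReal : ℝ) : EReal) ≤ erealConjugate F b := by
  refine le_trans ?_ (le_iSup (fun yy => ((yy * b : ℝ) : EReal) - F yy) s0)
  conv_rhs => rw [show F s0 = (((F s0).toReal : ℝ) : EReal) from (EReal.coe_toReal hs0 hb0).symm]
  rw [← EReal.coe_sub]

/-- for proper, convex, lower semicontinuous `F : ℝ → ℝ ∪ {+∞}`,
for all `x > 0` and `y ∈ ℝ`,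
`x·F(y/x) = sup { a·x + b·y : (a,b) ∈ ℝ², a + F*(b) ≤ 0 }`. -/
theorem perspective_eq_sup_over_conjugate_constraint (F : ℝ → EReal)
    (hne_bot : ∀ y, F y ≠ ⊥)
    (hproper : ∃ y, F y ≠ ⊤)
    (hconv : ∀ y z : ℝ, ∀ s t : ℝ, 0 ≤ s → 0 ≤ t → s + t = 1 →
      F (s * y + t * z) ≤ (s : EReal) * F y + (t : EReal) * F z)
    (hlsc : LowerSemicontinuous F)
    (x : ℝ) (hx : 0 < x) (y : ℝ) :
    (x : EReal) * F (y / x) =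
      ⨆ p ∈ {q : ℝ × ℝ | (q.1 : EReal) + erealConjugate F q.2 ≤ 0},
        ((p.1 * x + p.2 * y : ℝ) : EReal) := by
  obtain ⟨s0, hs0⟩ := hproper
  set t := y / x with ht
  have hyt : y = t * x := by rw [ht]; field_simp
  have hE := epi_convex F hconv hne_bot
  have hEc := epi_closed F hlsc
  apply le_antisymm
  · -- x * F t ≤ sup
    apply ereal_le_of_forall_real_lt
    intro w hw
    have hrt : ((w / x : ℝ) : EReal) < F t := by
      rcases eq_or_ne (F t) ⊤ with h | h
      · rw [h]; exact EReal.coe_lt_top _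
      · rw [show F t = (((F t).toReal : ℝ) : EReal) from
          (EReal.coe_toReal h (hne_bot t)).symm] at hw ⊢
        rw [← EReal.coe_mul] at hw
        have hw' : w < x * (F t).toReal := EReal.coe_lt_coe_iff.mp hw
        exact EReal.coe_lt_coe_iff.mpr (by rw [div_lt_iff₀ hx]; linarith)
    obtain ⟨b, c, hmin, hval⟩ := exists_minorant F hne_bot ⟨s0, hs0⟩ hE hEc t (w / x) hrt
    have hconj : erealConjugate F b ≤ ((-c : ℝ) : EReal) := conj_le F hne_bot b c hmin
    have hmem : (c, b) ∈ {q : ℝ × ℝ | (q.1 : EReal) + erealConjugate F q.2 ≤ 0} := by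
      show ((c : ℝ) : EReal) + erealConjugate F b ≤ 0
      calc ((c : ℝ) : EReal) + erealConjugate F b ≤ ((c : ℝ) : EReal) + ((-c : ℝ) : EReal) :=
            add_le_add_right hconj _
        _ = (((c + -c : ℝ)) : EReal) := by rw [EReal.coe_add]
        _ = 0 := by norm_num
    refine le_trans ?_ (le_biSup (fun p : ℝ × ℝ => ((p.1 * x + p.2 * y : ℝ) : EReal)) hmem)
    apply EReal.coe_le_coe_iff.mpr
    have : w / x < b * t + c := hval
    rw [div_lt_iff₀ hx] at this
    rw [hyt]; nlinarith
  · -- sup ≤ x * F t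
    apply iSup₂_le
    intro p hp
    have hp' : (p.1 : EReal) + erealConjugate F p.2 ≤ 0 := hp
    rcases eq_or_ne (F t) ⊤ with h | h
    · rw [h, EReal.mul_top_of_pos (EReal.coe_pos.mpr hx)]; exact le_top
    · -- F t finite
      set v := (F t).toReal with hv
      have hFt : F t = ((v : ℝ) : EReal) := (EReal.coe_toReal h (hne_bot t)).symm
      -- conjugate is finite
      have hlow : ((s0 * p.2 - (F s0).toReal : ℝ) : EReal) ≤ erealConjugate F p.2 :=
        real_le_conj F hs0 (hne_bot s0) p.2
      have hnetop : erealConjugate F p.2 ≠ ⊤ := by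
        intro htop
        rw [htop, EReal.add_top_of_ne_bot (by simp : (p.1 : EReal) ≠ ⊥)] at hp'
        exact absurd hp' (by simp)
      have hnebot : erealConjugate F p.2 ≠ ⊥ := fun hb => by
        rw [hb, le_bot_iff] at hlow; exact EReal.coe_ne_bot _ hlow
      set g := (erealConjugate F p.2).toReal with hg
      have hgc : erealConjugate F p.2 = ((g : ℝ) : EReal) := (EReal.coe_toReal hnetop hnebot).symm
      have hpg : p.1 + g ≤ 0 := by
        rw [hgc, ← EReal.coe_add] at hp'
        exact_mod_cast hp'
      have hkey : t * p.2 - v ≤ g := by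
        have h1 : ((t * p.2 - v : ℝ) : EReal) ≤ erealConjugate F p.2 := by
          refine le_trans ?_ (le_iSup (fun yy => ((yy * p.2 : ℝ) : EReal) - F yy) t)
          rw [hFt, ← EReal.coe_sub]
        rw [hgc] at h1
        exact_mod_cast h1
      rw [hFt, ← EReal.coe_mul]
      apply EReal.coe_le_coe_iff.mpr
      rw [hyt]; nlinarith
end

section
/- Let ρ : ℝ → ℝ be a continuous, nonnegative, integrable function with ∫_ℝ |x| ρ(x) dx < ∞, and define the call price function C(K) := ∫_ℝ max(x − K, 0) ρ(x) dx for K ∈ ℝ. Then C is twice differentiable on ℝ with C'(K) = −∫_{K}^{∞} ρ(x) dx and C''(K) = ρ(K) for every K. (Breeden–Litzenberger formula.) -/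
open MeasureTheory

/-- Breeden–Litzenberger: if `ρ` is a continuous, nonnegative,
integrable density with finite first moment, then the call price
`C(K) = ∫ (x − K)⁺ ρ(x) dx` is twice differentiable, with
`C'(K) = −∫_K^∞ ρ` and `C''(K) = ρ(K)`. -/
theorem breeden_litzenberger (ρ : ℝ → ℝ)
    (hcont : Continuous ρ) (hnonneg : ∀ x, 0 ≤ ρ x)
    (hint : Integrable ρ)
    (hmom : Integrable (fun x => |x| * ρ x)) :
    ∀ K : ℝ,
      HasDerivAt (fun k : ℝ => ∫ x, max (x - k) 0 * ρ x)
        (-(∫ x in Set.Ioi K, ρ x)) K ∧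
      HasDerivAt (deriv (fun k : ℝ => ∫ x, max (x - k) 0 * ρ x)) (ρ K) K := by
  -- first derivative at an arbitrary point
  have hmain : ∀ K : ℝ, HasDerivAt (fun k : ℝ => ∫ x, max (x - k) 0 * ρ x)
      (-(∫ x in Set.Ioi K, ρ x)) K := by
    intro K
    set F : ℝ → ℝ → ℝ := fun k x => max (x - k) 0 * ρ x with hF
    set F' : ℝ → ℝ := fun x => if K < x then -ρ x else 0 with hF'
    have hFmeas : ∀ k : ℝ, AEStronglyMeasurable (F k) volume := fun k =>
      (((continuous_id.sub continuous_const).max continuous_const).mul hcont).aestronglyMeasurable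
    have hFint : Integrable (F K) := by
      refine (hmom.add (hint.const_mul |K|)).mono' (hFmeas K) ?_
      filter_upwards with x
      have h1 : |max (x - K) 0| ≤ |x| + |K| := by
        rw [abs_of_nonneg (le_max_right _ _)]
        rcases le_or_gt (x - K) 0 with h | h
        · simpa [max_eq_right h] using add_nonneg (abs_nonneg x) (abs_nonneg K)
        · rw [max_eq_left h.le]
          calc x - K ≤ |x - K| := le_abs_self _
            _ ≤ |x| + |K| := abs_sub _ _
      calc ‖max (x - K) 0 * ρ x‖ = |max (x - K) 0| * ρ x := by
            rw [norm_mul, Real.norm_eq_abs, Real.norm_eq_abs, abs_of_nonneg (hnonneg x)]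
        _ ≤ (|x| + |K|) * ρ x := by
            exact mul_le_mul_of_nonneg_right h1 (hnonneg x)
        _ = |x| * ρ x + |K| * ρ x := by ring
    have hF'meas : AEStronglyMeasurable F' volume := by
      have : F' = fun x => (Set.Ioi K).indicator (fun x => -ρ x) x := by
        funext x
        by_cases h : K < x <;> simp [hF', Set.indicator, h]
      rw [this]
      exact ((hcont.neg.measurable).indicator measurableSet_Ioi).aestronglyMeasurable
    have hlip : ∀ᵐ x : ℝ, LipschitzOnWith (Real.nnabs (ρ x)) (fun k => F k x) (Metric.ball K 1) := by
      filter_upwards with x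
      refine LipschitzOnWith.mono (LipschitzWith.of_dist_le_mul fun k1 k2 => ?_).lipschitzOnWith
        (Set.subset_univ _)
      simp only [Real.dist_eq, hF]
      have : max (x - k1) 0 * ρ x - max (x - k2) 0 * ρ x
          = (max (x - k1) 0 - max (x - k2) 0) * ρ x := by ring
      rw [this, abs_mul]
      have h2 : |max (x - k1) 0 - max (x - k2) 0| ≤ |k1 - k2| := by
        have := abs_max_sub_max_le_abs (x - k1) (x - k2) 0
        simpa [abs_sub_comm] using this
      calc |max (x - k1) 0 - max (x - k2) 0| * |ρ x| ≤ |k1 - k2| * |ρ x| :=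
            mul_le_mul_of_nonneg_right h2 (abs_nonneg _)
        _ = ↑(Real.nnabs (ρ x)) * |k1 - k2| := by
            rw [mul_comm]; simp [Real.coe_nnabs]
    have hdiff : ∀ᵐ x : ℝ, HasDerivAt (fun k => F k x) (F' x) K := by
      have hne : ∀ᵐ x : ℝ, x ≠ K := by
        rw [ae_iff]
        have : {x : ℝ | ¬ x ≠ K} = {K} := by ext x; simp
        rw [this]; exact Real.volume_singleton
      filter_upwards [hne] with x hx
      rcases lt_or_gt_of_ne hx with h | h
      · -- x < K : F k x = 0 near K
        have : HasDerivAt (fun k : ℝ => (0 : ℝ)) 0 K := hasDerivAt_const _ _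
        have heq : (fun k : ℝ => (0 : ℝ)) =ᶠ[nhds K] fun k => F k x := by
          filter_upwards [Ioi_mem_nhds h] with k hk
          simp only [hF]
          rw [max_eq_right (by simp only [Set.mem_Ioi] at hk; linarith), zero_mul]
        have := this.congr_of_eventuallyEq heq.symm
        simpa [hF', not_lt.mpr h.le, if_neg (not_lt.mpr h.le)] using this
      · -- x > K : F k x = (x - k) * ρ x near K
        have h0 : HasDerivAt (fun k : ℝ => (x - k) * ρ x) (-ρ x) K := by
          have : HasDerivAt (fun k : ℝ => x - k) (-1) K := by
            simpa using (hasDerivAt_id K).const_sub x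
          simpa using this.mul_const (ρ x)
        have heq : (fun k : ℝ => (x - k) * ρ x) =ᶠ[nhds K] fun k => F k x := by
          filter_upwards [Iio_mem_nhds h] with k hk
          simp only [Set.mem_Iio] at hk
          simp only [hF]
          rw [max_eq_left (by linarith)]
        have := h0.congr_of_eventuallyEq heq.symm
        simpa [hF', if_pos h] using this
    have key := hasDerivAt_integral_of_dominated_loc_of_lip (F := F) (F' := F')
      (bound := ρ) (Metric.ball_mem_nhds K one_pos) (Filter.Eventually.of_forall fun k => hFmeas k) hFint hF'meas hlip hint hdiff
    have hval : (∫ x, F' x) = -(∫ x in Set.Ioi K, ρ x) := by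
      have : F' = fun x => (Set.Ioi K).indicator (fun x => -ρ x) x := by
        funext x; by_cases h : K < x <;> simp [hF', Set.indicator, h]
      rw [this, integral_indicator measurableSet_Ioi, integral_neg]
    rw [hval] at key
    exact key.2
  intro K
  refine ⟨hmain K, ?_⟩
  have hderiv : deriv (fun k : ℝ => ∫ x, max (x - k) 0 * ρ x)
      = fun K => -(∫ x in Set.Ioi K, ρ x) := by
    funext k; exact (hmain k).deriv
  rw [hderiv]
  -- now show HasDerivAt (fun K => -∫_{Ioi K} ρ) (ρ K) K
  have hIic : ∀ k : ℝ, -(∫ x in Set.Ioi k, ρ x) = (∫ x in Set.Iic k, ρ x) - ∫ x, ρ x := by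
    intro k
    have := intervalIntegral.integral_Iic_add_Ioi (b := k) hint.integrableOn hint.integrableOn
    linarith
  have hsub : ∀ k : ℝ, (∫ x in Set.Iic k, ρ x) - ∫ x in Set.Iic (0:ℝ), ρ x
      = ∫ x in (0:ℝ)..k, ρ x := fun k =>
    intervalIntegral.integral_Iic_sub_Iic hint.integrableOn hint.integrableOn
  have heq : (fun k : ℝ => -(∫ x in Set.Ioi k, ρ x))
      = fun k : ℝ => (∫ x in (0:ℝ)..k, ρ x) + ((∫ x in Set.Iic (0:ℝ), ρ x) - ∫ x, ρ x) := by
    funext k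
    rw [hIic k, ← hsub k]; ring
  rw [heq]
  have hFTC : HasDerivAt (fun k : ℝ => ∫ x in (0:ℝ)..k, ρ x) (ρ K) K :=
    intervalIntegral.integral_hasDerivAt_right (hint.intervalIntegrable)
      hcont.stronglyMeasurable.stronglyMeasurableAtFilter hcont.continuousAt
  exact hFTC.add_const _
end

section
/- Let m ∈ ℝ and 0 < s₀ ≤ s₁. Then for every convex function φ : ℝ → ℝ that is integrable with respect to both the Gaussian measures N(m, s₀²) and N(m, s₁²), one has ∫ φ dN(m, s₀²) ≤ ∫ φ dN(m, s₁²). In particular, the pair of marginals (N(m, s₀²), N(m, s₁²)) satisfies the convex-order condition required by Strassen's theorem for the existence of a martingale transport plan. -/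
open MeasureTheory ProbabilityTheory
open scoped NNReal

lemma gaussian_map_affine_aux (m : ℝ) (s : ℝ≥0) :
    (gaussianReal 0 1).map (fun z => m + (s : ℝ) * z) = gaussianReal m (s ^ 2) := by
  have h1 : (gaussianReal 0 1).map ((s : ℝ) * ·) = gaussianReal 0 (s ^ 2) := by
    rw [gaussianReal_map_const_mul]
    congr 1
    · ring
    · ext
      push_cast
      ring
  have h2 : (fun z => m + (s : ℝ) * z) = (fun x => m + x) ∘ ((s : ℝ) * ·) := rfl
  rw [h2, ← Measure.map_map (by fun_prop) (by fun_prop), h1,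
    gaussianReal_map_const_add, zero_add]

/-- Gaussians with common mean are increasing in the convex order as
the variance increases: for `0 < s₀ ≤ s₁` and every convex `φ` integrable with
respect to both `N(m, s₀²)` and `N(m, s₁²)`,
`∫ φ dN(m, s₀²) ≤ ∫ φ dN(m, s₁²)`. This is the convex-order condition of
Strassen's theorem for the existence of a martingale transport plan. -/
theorem gaussian_convex_order (m : ℝ) (s₀ s₁ : ℝ≥0) (hs₀ : 0 < s₀) (hs : s₀ ≤ s₁) :
    ∀ φ : ℝ → ℝ, ConvexOn ℝ Set.univ φ →
      Integrable φ (gaussianReal m (s₀ ^ 2)) →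
      Integrable φ (gaussianReal m (s₁ ^ 2)) →
      ∫ x, φ x ∂(gaussianReal m (s₀ ^ 2)) ≤ ∫ x, φ x ∂(gaussianReal m (s₁ ^ 2)) := by
  intro φ hφ hint0 hint1
  have hφc : Continuous φ := by
    exact continuousOn_univ.mp (hφ.continuousOn isOpen_univ)
  set γ := gaussianReal 0 1 with hγdef
  have hs₁pos : (0 : ℝ) < (s₁ : ℝ) := by exact_mod_cast lt_of_lt_of_le hs₀ hs
  have hs₁ne : (s₁ : ℝ) ≠ 0 := ne_of_gt hs₁pos
  have hmap0 : γ.map (fun z => m + (s₀ : ℝ) * z) = gaussianReal m (s₀ ^ 2) :=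
    gaussian_map_affine_aux m s₀
  have hmap1 : γ.map (fun z => m + (s₁ : ℝ) * z) = gaussianReal m (s₁ ^ 2) :=
    gaussian_map_affine_aux m s₁
  have hneg : γ.map (fun z => -z) = γ := by
    have : (fun z : ℝ => -z) = ((-1 : ℝ) * ·) := by funext z; ring
    rw [hγdef, this, gaussianReal_map_const_mul]
    norm_num
  -- integrability of compositions
  have hi0 : Integrable (fun z => φ (m + (s₀ : ℝ) * z)) γ := by
    rw [← hmap0] at hint0
    exact (integrable_map_measure hφc.aestronglyMeasurable (by fun_prop)).mp hint0
  have hi1 : Integrable (fun z => φ (m + (s₁ : ℝ) * z)) γ := by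
    rw [← hmap1] at hint1
    exact (integrable_map_measure hφc.aestronglyMeasurable (by fun_prop)).mp hint1
  have hi1' : Integrable (fun z => φ (m - (s₁ : ℝ) * z)) γ := by
    have h := hi1
    rw [← hneg] at h
    have := (integrable_map_measure
      (hφc.comp (by continuity)).aestronglyMeasurable (f := fun z : ℝ => -z)
      (by fun_prop)).mp h
    simpa [Function.comp_def, mul_neg, sub_eq_add_neg] using this
  -- symmetry of the integral
  have hsym : ∫ z, φ (m - (s₁ : ℝ) * z) ∂γ = ∫ z, φ (m + (s₁ : ℝ) * z) ∂γ := by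
    have := integral_map (μ := γ) (φ := fun z : ℝ => -z)
      (f := fun z => φ (m + (s₁ : ℝ) * z)) (by fun_prop)
      (hφc.comp (by continuity)).aestronglyMeasurable
    rw [hneg] at this
    rw [this]
    simp [mul_neg, sub_eq_add_neg]
  -- the convexity parameters
  set a : ℝ := (s₀ : ℝ) / (s₁ : ℝ) with ha
  have ha0 : 0 < a := div_pos (by exact_mod_cast hs₀) hs₁pos
  have ha1 : a ≤ 1 := by
    rw [div_le_one hs₁pos]
    exact_mod_cast hs
  set t : ℝ := (1 + a) / 2 with ht
  set u : ℝ := (1 - a) / 2 with hu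
  have ht0 : 0 ≤ t := by positivity
  have hu0 : 0 ≤ u := by simp only [hu]; linarith
  have htu : t + u = 1 := by simp only [ht, hu]; ring
  have key : ∀ z : ℝ, φ (m + (s₀ : ℝ) * z) ≤
      t * φ (m + (s₁ : ℝ) * z) + u * φ (m - (s₁ : ℝ) * z) := by
    intro z
    have h := hφ.2 (Set.mem_univ (m + (s₁ : ℝ) * z)) (Set.mem_univ (m - (s₁ : ℝ) * z))
      ht0 hu0 htu
    have heq : t • (m + (s₁ : ℝ) * z) + u • (m - (s₁ : ℝ) * z) = m + (s₀ : ℝ) * z := by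
      simp only [smul_eq_mul, ht, hu, ha]
      field_simp
      ring
    rw [heq] at h
    simpa [smul_eq_mul] using h
  calc ∫ x, φ x ∂(gaussianReal m (s₀ ^ 2))
      = ∫ z, φ (m + (s₀ : ℝ) * z) ∂γ := by
        rw [← hmap0, integral_map (by fun_prop) (by rw [hmap0]; exact hφc.aestronglyMeasurable)]
    _ ≤ ∫ z, t * φ (m + (s₁ : ℝ) * z) + u * φ (m - (s₁ : ℝ) * z) ∂γ := by
        refine integral_mono hi0 ((hi1.const_mul t).add (hi1'.const_mul u)) ?_
        intro z
        exact key z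
    _ = t * ∫ z, φ (m + (s₁ : ℝ) * z) ∂γ + u * ∫ z, φ (m - (s₁ : ℝ) * z) ∂γ := by
        rw [integral_add (hi1.const_mul t) (hi1'.const_mul u), integral_const_mul,
          integral_const_mul]
    _ = ∫ z, φ (m + (s₁ : ℝ) * z) ∂γ := by
        rw [hsym, ← add_mul, htu, one_mul]
    _ = ∫ x, φ x ∂(gaussianReal m (s₁ ^ 2)) := by
        rw [← hmap1, integral_map (by fun_prop) (by rw [hmap1]; exact hφc.aestronglyMeasurable)]
end
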